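/- Let U be a vector space over a field F with finite dimension n, and let μ be a fuzzy subspace of U. Then the image set Im μ = {μ(x) : x ∈ U} is finite and has cardinality at most n + 1. -/
import Mathlib


/-- A fuzzy subspace of a vector space `U` over `F`: a function into `[0,1]` with
`μ(x-y) ≥ min (μ x) (μ y)` and `μ(c • x) ≥ μ x`. -/
def IsFuzzySubspace (F : Type*) [Field F] {U : Type*} [AddCommGroup U] [Module F U]
    (μ : U → ℝ) : Prop :=
  (∀ x, μ x ∈ Set.Icc (0 : ℝ) 1) ∧
  (∀ x y : U, min (μ x) (μ y) ≤ μ (x - y)) ∧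
  (∀ (c : F) (x : U), μ x ≤ μ (c • x))

/-- The "fuzzy linear independence" condition on a set `β`: for any nonempty finite set of
distinct vectors of `β` and nonzero scalars, `μ` of the linear combination is the minimum
of the values of `μ` on those vectors. -/
def FuzzyMinOn (F : Type*) [Field F] {U : Type*} [AddCommGroup U] [Module F U]
    (μ : U → ℝ) (β : Set U) : Prop :=
  ∀ (s : Finset U), ↑s ⊆ β → ∀ (hs : s.Nonempty) (c : U → F),
    (∀ x ∈ s, c x ≠ 0) → μ (∑ x ∈ s, c x • x) = s.inf' hs μ

/-- `β` is a fuzzy basis of the fuzzy subspace `μ` of `U`: an ordinary basis of `U`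
satisfying the fuzzy min-condition. -/
def IsFuzzyBasis (F : Type*) [Field F] {U : Type*} [AddCommGroup U] [Module F U]
    (μ : U → ℝ) (β : Set U) : Prop :=
  LinearIndependent F ((↑) : β → U) ∧ Submodule.span F β = ⊤ ∧ FuzzyMinOn F μ β

/-- `β` is a fuzzy basis of the restriction `μ|S`, where `S` is (the carrier of) a subspace:
a linearly independent subset of `S` spanning `S`, satisfying the fuzzy min-condition. -/
def IsFuzzyBasisOn (F : Type*) [Field F] {U : Type*} [AddCommGroup U] [Module F U]
    (μ : U → ℝ) (S : Set U) (β : Set U) : Prop :=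
  β ⊆ S ∧ LinearIndependent F ((↑) : β → U) ∧
    S ⊆ (Submodule.span F β : Submodule F U) ∧ FuzzyMinOn F μ β

/-- Zadeh image of a fuzzy set under a map; the real `sSup` satisfies `sSup ∅ = 0`. -/
noncomputable def fuzzyImage {U V : Type*} (f : U → V) (μ : U → ℝ) : V → ℝ :=
  fun y => sSup (μ '' {x | f x = y})

/-- Level subset of a fuzzy set: `μ_t = {x : μ x ≥ t}`. -/
def levelSet {U : Type*} (μ : U → ℝ) (t : ℝ) : Set U := {x | t ≤ μ x}

/-- For a fuzzy subspace `μ` of an `n`-dimensional space `U`, the image set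
`Im μ` is finite with at most `n + 1` elements. -/
theorem image_finite_card_le
    {F : Type*} [Field F] {U : Type*} [AddCommGroup U] [Module F U]
    [FiniteDimensional F U] (μ : U → ℝ) (hμ : IsFuzzySubspace F μ) :
    (Set.range μ).Finite ∧ (Set.range μ).ncard ≤ Module.finrank F U + 1 := by
  classical
  obtain ⟨h01, hsub, hsmul⟩ := hμ
  have h0 : ∀ x, μ x ≤ μ 0 := fun x => by simpa using hsmul 0 x
  have hneg : ∀ x, μ x ≤ μ (-x) := fun x => by simpa using hsmul (-1) x
  have hadd : ∀ x y, min (μ x) (μ y) ≤ μ (x + y) := by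
    intro x y
    have h := hsub x (-y)
    rw [sub_neg_eq_add] at h
    exact le_trans (min_le_min le_rfl (hneg y)) h
  set n := Module.finrank F U with hn
  let V : ℝ → Submodule F U := fun t =>
    if ht : t ≤ μ 0 then
      { carrier := {x | t ≤ μ x}
        zero_mem' := ht
        add_mem' := fun {a b} ha hb => le_trans (le_min ha hb) (hadd a b)
        smul_mem' := fun c x hx => le_trans hx (hsmul c x) }
    else ⊥
  have hmem : ∀ t x, t ≤ μ 0 → (x ∈ V t ↔ t ≤ μ x) := by
    intro t x ht
    simp only [V, dif_pos ht]
    rfl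
  let N : ℝ → ℕ := fun t => Module.finrank F (V t)
  have hanti : StrictAntiOn N (Set.range μ) := by
    intro a ha b hb hab
    obtain ⟨x, hx⟩ := ha
    obtain ⟨z, hz⟩ := hb
    have hVle : V b ≤ V a := by
      intro y hy
      rw [hmem b y (hz ▸ h0 z)] at hy
      rw [hmem a y (hx ▸ h0 x)]
      exact hab.le.trans hy
    have hVlt : V b < V a := by
      refine lt_of_le_of_ne hVle fun h => ?_
      have hxa : x ∈ V a := (hmem a x (hx ▸ h0 x)).2 hx.ge
      rw [← h, hmem b x (hz ▸ h0 z)] at hxa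
      exact absurd (hx ▸ hxa) (not_le.2 hab)
    exact Submodule.finrank_lt_finrank_of_lt hVlt
  have hinj : Set.InjOn N (Set.range μ) := hanti.injOn
  have hmaps : ∀ t ∈ Set.range μ, N t ∈ Set.Iio (n + 1) := by
    intro t _
    exact Nat.lt_succ_of_le (Submodule.finrank_le (V t))
  have hfin : (Set.range μ).Finite := by
    refine Set.Finite.of_finite_image ?_ hinj
    exact (Set.finite_Iio (n + 1)).subset (Set.image_subset_iff.2 hmaps)
  refine ⟨hfin, ?_⟩
  calc (Set.range μ).ncard = (N '' Set.range μ).ncard :=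
        (Set.ncard_image_of_injOn hinj).symm
    _ ≤ (Set.Iio (n + 1)).ncard :=
        Set.ncard_le_ncard (Set.image_subset_iff.2 hmaps) (Set.finite_Iio (n + 1))
    _ = n + 1 := by
        rw [← Finset.coe_Iio, Set.ncard_coe_finset, Nat.card_Iio]
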